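/- Let f : ℝ → ℝ be twice continuously differentiable, let x* be a local maximum of f, and assume f''(x*) < 0. Then there exists ε > 0 such that for every grid spacing dx with 0 < dx < ε and every grid offset x₀ ∈ ℝ, there exists an integer k such that the grid point x^g = x₀ + k·dx satisfies |x^g − x*| ≤ dx, f(x^g) ≥ f(x^g + dx), and f(x^g) ≥ f(x^g − dx). -/

import Mathlib

/-- If `f : ℝ → ℝ` is `C²`, `x*` is a local maximum of `f`, and
`f''(x*) < 0`, then there is `ε > 0` such that for every grid spacing
`0 < dx < ε` and every grid offset `x₀`, some grid point `x^g = x₀ + k·dx`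
satisfies `|x^g − x*| ≤ dx`, `f(x^g) ≥ f(x^g + dx)` and `f(x^g) ≥ f(x^g − dx)`. -/
theorem grid_ridge_point_near_local_max
    (f : ℝ → ℝ) (hf : ContDiff ℝ 2 f) (xstar : ℝ)
    (hmax : IsLocalMax f xstar) (hf'' : deriv (deriv f) xstar < 0) :
    ∃ ε > 0, ∀ dx : ℝ, 0 < dx → dx < ε → ∀ x₀ : ℝ, ∃ k : ℤ,
      |x₀ + k * dx - xstar| ≤ dx ∧
      f (x₀ + k * dx) ≥ f (x₀ + k * dx + dx) ∧
      f (x₀ + k * dx) ≥ f (x₀ + k * dx - dx) := by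
  have hf1 : ContDiff ℝ 1 (deriv f) :=
    (contDiff_succ_iff_deriv.mp (show ContDiff ℝ (1 + 1) f by norm_num; exact hf)).2.2
  have hfd : Differentiable ℝ f := hf.differentiable (by norm_num)
  have hfd' : Differentiable ℝ (deriv f) := hf1.differentiable (by norm_num)
  have hg : Continuous (deriv (deriv f)) := hf1.continuous_deriv le_rfl
  obtain ⟨r, hr, hball⟩ := Metric.isOpen_iff.mp (isOpen_Iio.preimage hg) xstar hf''
  set δ := r / 2 with hδdef
  have hδ : 0 < δ := by positivity
  have hneg : ∀ x ∈ Set.Icc (xstar - δ) (xstar + δ), deriv (deriv f) x < 0 := by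
    intro x hx
    apply hball
    rw [Metric.mem_ball, Real.dist_eq, abs_lt]
    constructor
    · linarith [hx.1]
    · linarith [hx.2]
  have hanti : StrictAntiOn (deriv f) (Set.Icc (xstar - δ) (xstar + δ)) :=
    strictAntiOn_of_deriv_neg (convex_Icc _ _) hfd'.continuous.continuousOn
      (fun x hx => hneg x (interior_subset hx))
  have hd0 : deriv f xstar = 0 := hmax.deriv_eq_zero
  have hmono : StrictMonoOn f (Set.Icc (xstar - δ) xstar) := by
    apply strictMonoOn_of_deriv_pos (convex_Icc _ _) hfd.continuous.continuousOn
    intro x hx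
    rw [interior_Icc] at hx
    have : deriv f xstar < deriv f x :=
      hanti ⟨hx.1.le, by linarith [hx.2]⟩ ⟨by linarith, by linarith⟩ hx.2
    linarith [this, hd0.symm ▸ this]
  have hanti2 : StrictAntiOn f (Set.Icc xstar (xstar + δ)) := by
    apply strictAntiOn_of_deriv_neg (convex_Icc _ _) hfd.continuous.continuousOn
    intro x hx
    rw [interior_Icc] at hx
    obtain ⟨hx1, hx2⟩ := hx
    have : deriv f x < deriv f xstar :=
      hanti ⟨by linarith, by linarith⟩ ⟨by linarith, by linarith⟩ hx1
    linarith
  refine ⟨δ / 2, by positivity, fun dx hdx hdxδ x₀ => ?_⟩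
  set k : ℤ := ⌊(xstar - x₀) / dx⌋ with hk
  have h1 : (k : ℝ) * dx ≤ xstar - x₀ :=
    (le_div_iff₀ hdx).mp (Int.floor_le _)
  have h2 : xstar - x₀ < ((k : ℝ) + 1) * dx :=
    (div_lt_iff₀ hdx).mp (Int.lt_floor_add_one _)
  set xl : ℝ := x₀ + (k : ℝ) * dx with hxl
  have hxl1 : xl ≤ xstar := by rw [hxl]; linarith
  have hxl2 : xstar < xl + dx := by rw [hxl]; linarith
  have h2dx : 2 * dx < δ := by linarith
  by_cases hcase : f (xl + dx) ≤ f xl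
  · refine ⟨k, ?_, hcase, ?_⟩
    · rw [abs_le]; constructor <;> [skip; skip] <;>
        simp only [← hxl] <;> [linarith; linarith]
    · have := hmono (a := xl - dx) (b := xl)
        ⟨by linarith, by linarith⟩ ⟨by linarith, hxl1⟩ (by linarith)
      simp only [← hxl]
      linarith
  · push_neg at hcase
    refine ⟨k + 1, ?_, ?_, ?_⟩ <;>
      simp only [Int.cast_add, Int.cast_one, add_one_mul, ← add_assoc, ← hxl]
    · rw [abs_le]; constructor <;> linarith
    · have := hanti2 (a := xl + dx) (b := xl + dx + dx)
        ⟨hxl2.le, by linarith⟩ ⟨by linarith, by linarith⟩ (by linarith)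
      linarith
    · have : xl + dx - dx = xl := by ring
      rw [this]
      linarith
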